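/- Let p and q be coprime positive integers with q odd, and assume p > q if p is odd. Let t and u be the pinch integers of (p,q). Then the integers p − 2t and q − 2u are coprime, i.e., gcd(|p − 2t|, |q − 2u|) = 1. (This expresses arithmetically that the result of a pinch move on a torus knot is again a torus knot.) -/

import Mathlib

/-- `t` and `u` are the pinch integers of the pair `(p, q)`:
`0 ≤ t ≤ p - 1`, `0 ≤ u ≤ q - 1`, `q·t ≡ -1 (mod p)` and `p·u ≡ 1 (mod q)`. -/
def PinchInts (p q t u : ℤ) : Prop :=
  0 ≤ t ∧ t ≤ p - 1 ∧ 0 ≤ u ∧ u ≤ q - 1 ∧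
    q * t ≡ -1 [ZMOD p] ∧ p * u ≡ 1 [ZMOD q]

/-- The parameters `p - 2t` and `q - 2u` produced by a pinch move are coprime:
the result of a pinch move on a torus knot is again a torus knot. -/
theorem pinch_coprime (p q t u : ℤ)
    (hp : 0 < p) (hq : 0 < q) (hcop : Int.gcd p q = 1)
    (hqodd : Odd q) (hpodd : Odd p → q < p)
    (htu : PinchInts p q t u) :
    Int.gcd (p - 2 * t) (q - 2 * u) = 1 := by
  obtain ⟨ht0, ht1, hu0, hu1, hqt, hpu⟩ := htu
  obtain ⟨a, ha⟩ : p ∣ -1 - q * t := hqt.dvd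
  obtain ⟨b, hb⟩ : q ∣ 1 - p * u := hpu.dvd
  have hdp : p ∣ p * u - q * t - 1 := ⟨u + a, by linarith⟩
  have hdq : q ∣ p * u - q * t - 1 := ⟨-b - t, by linarith⟩
  have hcop' : IsCoprime p q := Int.isCoprime_iff_gcd_eq_one.mpr hcop
  obtain ⟨k, hk⟩ : p * q ∣ p * u - q * t - 1 := hcop'.mul_dvd hdp hdq
  have h1 : 0 ≤ p * u := mul_nonneg hp.le hu0
  have h2 : p * u ≤ p * (q - 1) := mul_le_mul_of_nonneg_left hu1 hp.le
  have h3 : 0 ≤ q * t := mul_nonneg hq.le ht0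
  have h4 : q * t ≤ q * (p - 1) := mul_le_mul_of_nonneg_left ht1 hq.le
  have hpq0 : 0 < p * q := mul_pos hp hq
  have hklo : -1 ≤ k := by nlinarith
  have hkhi : k ≤ 0 := by nlinarith
  interval_cases k
  · -- k = -1 : forces q = 1, u = 0
    have hq1 : q = 1 := by nlinarith
    have hu : u = 0 := by omega
    subst hq1; subst hu
    simp
  · -- k = 0 : p*u - q*t = 1
    have key : p * u - q * t = 1 := by linarith
    set g := Int.gcd (p - 2 * t) (q - 2 * u) with hg
    have hgl : (g : ℤ) ∣ p - 2 * t := Int.gcd_dvd_left _ _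
    have hgr : (g : ℤ) ∣ q - 2 * u := Int.gcd_dvd_right _ _
    have hg2 : (g : ℤ) ∣ 2 := by
      have h2eq : q * (p - 2 * t) - p * (q - 2 * u) = 2 := by ring_nf; linarith
      exact h2eq ▸ dvd_sub (hgl.mul_left q) (hgr.mul_left p)
    have hg2' : g ∣ 2 := by exact_mod_cast hg2
    rcases (Nat.dvd_prime Nat.prime_two).mp hg2' with h | h
    · exact h
    · exfalso
      rw [h] at hgr
      obtain ⟨m, hm⟩ := hgr
      obtain ⟨n, hn⟩ := hqodd
      omega
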